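/- Let b be an irrational real number, and let γ = (γ_n)_{n≥1} be nonnegative reals with ∑_{n≥1} n·γ_n < ∞ and frequencies ω_n := n² − 2∑_{k=1}^n k·γ_k − 2n·∑_{k>n} γ_k. If there exist infinitely many integers n ≥ 1 such that n−1, n, n+1 all satisfy ω_{n−1}, ω_n, ω_{n+1} ∈ b·ℤ, then 2 ∈ b·ℤ, a contradiction. Hence no such infinite family of consecutive triples exists. -/

import Mathlib

/-- The Benjamin–Ono frequencies `ω_n = n² − 2∑_{k=1}^n k γ_k − 2n ∑_{k>n} γ_k`. -/
noncomputable def boFreq (γ : ℕ → ℝ) (n : ℕ) : ℝ :=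
  (n : ℝ) ^ 2 - 2 * (∑ k ∈ Finset.Icc 1 n, (k : ℝ) * γ k)
    - 2 * n * ∑' k : ℕ, if n < k then γ k else 0

lemma bo_summable (γ : ℕ → ℝ) (hγ : ∀ n, 0 ≤ γ n)
    (hsum : Summable fun n : ℕ => (n : ℝ) * γ n) : Summable γ := by
  rw [← summable_nat_add_iff 1]
  have h1 : Summable fun n : ℕ => ((n + 1 : ℕ) : ℝ) * γ (n + 1) :=
    (summable_nat_add_iff 1).mpr hsum
  refine Summable.of_nonneg_of_le (fun n => hγ _) (fun n => ?_) h1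
  have h2 : (1 : ℝ) ≤ ((n + 1 : ℕ) : ℝ) := by exact_mod_cast Nat.succ_le_succ (Nat.zero_le n)
  nlinarith [hγ (n + 1)]

lemma bo_tail_succ (γ : ℕ → ℝ) (hγ : ∀ n, 0 ≤ γ n) (hg : Summable γ) (n : ℕ) :
    (∑' k : ℕ, if n < k then γ k else 0)
      = γ (n + 1) + ∑' k : ℕ, if n + 1 < k then γ k else 0 := by
  have hs : ∀ m : ℕ, Summable fun k : ℕ => if m < k then γ k else 0 := fun m =>
    Summable.of_nonneg_of_le (fun k => by split <;> simp [hγ k])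
      (fun k => by split <;> simp [hγ k]) hg
  have h1 : Summable fun k : ℕ => if k = n + 1 then γ k else 0 :=
    Summable.of_nonneg_of_le (fun k => by split <;> simp [hγ k])
      (fun k => by split <;> simp [hγ k]) hg
  have key : ∀ k : ℕ, (if n < k then γ k else 0)
      = (if k = n + 1 then γ k else 0) + (if n + 1 < k then γ k else 0) := by
    intro k
    split_ifs <;> first | ring1 | omega
  rw [tsum_congr key, Summable.tsum_add h1 (hs (n + 1))]
  congr 1
  have : ∀ k : ℕ, (if k = n + 1 then γ k else 0) = (if k = n + 1 then γ (n + 1) else 0) := by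
    intro k; split_ifs with h
    · rw [h]
    · rfl
  rw [tsum_congr this, tsum_ite_eq (n + 1) (fun _ => γ (n + 1))]

lemma bo_diff2 (γ : ℕ → ℝ) (hγ : ∀ n, 0 ≤ γ n) (hg : Summable γ) (m : ℕ) :
    boFreq γ (m + 2) - 2 * boFreq γ (m + 1) + boFreq γ m = 2 + 2 * γ (m + 1) := by
  have t0 := bo_tail_succ γ hγ hg m
  have t1 := bo_tail_succ γ hγ hg (m + 1)
  have s1 : (∑ k ∈ Finset.Icc 1 (m + 1), (k : ℝ) * γ k)
      = (∑ k ∈ Finset.Icc 1 m, (k : ℝ) * γ k) + ((m + 1 : ℕ) : ℝ) * γ (m + 1) :=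
    Finset.sum_Icc_succ_top (by omega) _
  have s2 : (∑ k ∈ Finset.Icc 1 (m + 2), (k : ℝ) * γ k)
      = (∑ k ∈ Finset.Icc 1 (m + 1), (k : ℝ) * γ k) + ((m + 2 : ℕ) : ℝ) * γ (m + 2) :=
    Finset.sum_Icc_succ_top (by omega) _
  simp only [boFreq]
  rw [s2, s1, t1, t0, t1]
  push_cast
  ring

/-- For irrational `b`, there are only finitely many `n ≥ 1` such that
`ω_{n−1}, ω_n, ω_{n+1}` all belong to `b·ℤ`. -/
theorem stmt_10 (b : ℝ) (hb : Irrational b)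
    (γ : ℕ → ℝ) (hγ : ∀ n, 0 ≤ γ n)
    (hsum : Summable fun n : ℕ => (n : ℝ) * γ n) :
    {n : ℕ | 1 ≤ n ∧ (∃ m : ℤ, boFreq γ (n - 1) = b * m)
      ∧ (∃ m : ℤ, boFreq γ n = b * m)
      ∧ (∃ m : ℤ, boFreq γ (n + 1) = b * m)}.Finite := by
  classical
  have hg : Summable γ := bo_summable γ hγ hsum
  have hbne : b ≠ 0 := hb.ne_zero
  by_contra hinf
  set S := {n : ℕ | 1 ≤ n ∧ (∃ m : ℤ, boFreq γ (n - 1) = b * m)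
      ∧ (∃ m : ℤ, boFreq γ n = b * m)
      ∧ (∃ m : ℤ, boFreq γ (n + 1) = b * m)} with hS
  have hSinf : S.Infinite := hinf
  -- every n in S gives 2 + 2γ n ∈ bℤ
  have hex : ∀ n ∈ S, ∃ m : ℤ, 2 + 2 * γ n = b * m := by
    intro n hn
    obtain ⟨h1, ⟨m0, hm0⟩, ⟨m1, hm1⟩, ⟨m2, hm2⟩⟩ := hn
    match n, h1 with
    | (k + 1), _ =>
      refine ⟨m2 - 2 * m1 + m0, ?_⟩
      have hd := bo_diff2 γ hγ hg k
      have e0 : boFreq γ (k + 1 - 1) = boFreq γ k := by norm_num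
      rw [e0] at hm0
      have e2 : k + 1 + 1 = k + 2 := rfl
      rw [e2] at hm2
      rw [hm0, hm1, hm2] at hd
      push_cast
      linarith
  choose! M hM using hex
  -- γ tends to 0
  have hγ0 : Filter.Tendsto γ Filter.atTop (nhds 0) := hg.tendsto_atTop_zero
  -- restrict to n with γ n < 1
  have hev : ∀ᶠ n in Filter.atTop, γ n < 1 := hγ0.eventually_lt_const (by norm_num)
  rw [← Nat.cofinite_eq_atTop, Filter.eventually_cofinite] at hev
  have hS' : (S ∩ {n | γ n < 1}).Infinite := by
    have h := hSinf.diff hev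
    have heq : S \ {n | ¬ γ n < 1} = S ∩ {n | γ n < 1} := by
      ext n; simp [Set.mem_diff, Set.mem_inter_iff]
    rwa [heq] at h
  set S' := S ∩ {n | γ n < 1} with hS'def
  -- bound on M n for n ∈ S'
  set B : ℤ := ⌈4 / |b|⌉ with hB
  have hbound : ∀ n ∈ S', M n ∈ Finset.Icc (-B) B := by
    intro n hn
    have hnS : n ∈ S := hn.1
    have hγn : γ n < 1 := hn.2
    have hMn := hM n hnS
    have habs : |b * (M n : ℝ)| ≤ 4 := by
      rw [← hMn, abs_of_nonneg (by nlinarith [hγ n])]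
      nlinarith [hγ n]
    have hb0 : (0 : ℝ) < |b| := abs_pos.mpr hbne
    have h2 : |(M n : ℝ)| ≤ 4 / |b| := by
      rw [abs_mul] at habs
      rw [le_div_iff₀ hb0]
      nlinarith [abs_nonneg (M n : ℝ)]
    have h3 : ((|M n| : ℤ) : ℝ) ≤ (B : ℝ) := by
      rw [Int.cast_abs]
      exact h2.trans (Int.le_ceil _)
    have h4 : |M n| ≤ B := by exact_mod_cast h3
    rw [Finset.mem_Icc]
    exact abs_le.mp h4
  -- pigeonhole: some fiber is infinite
  have hfib : ∃ m : ℤ, (S' ∩ {n | M n = m}).Infinite := by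
    by_contra hc
    push_neg at hc
    have hfin : ∀ m : ℤ, (S' ∩ {n | M n = m}).Finite := fun m => hc m
    have hsub : S' ⊆ ⋃ m ∈ Finset.Icc (-B) B, (S' ∩ {n | M n = m}) := by
      intro n hn
      exact Set.mem_biUnion (hbound n hn) ⟨hn, rfl⟩
    exact hS' (Set.Finite.subset
      (Set.Finite.biUnion (Finset.Icc (-B) B).finite_toSet (fun m _ => hfin m)) hsub)
  obtain ⟨m, hF⟩ := hfib
  set F := S' ∩ {n | M n = m} with hFdef
  -- F nonempty
  obtain ⟨n0, hn0⟩ := hF.nonempty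
  have hMn0 := hM n0 hn0.1.1
  rw [hn0.2] at hMn0
  -- value b * m = 2 + 2 * γ n0
  by_cases hbm : b * (m : ℝ) = 2
  · -- b rational, contradiction
    have hm0 : m ≠ 0 := by
      intro h; rw [h] at hbm; norm_num at hbm
    apply hb
    refine ⟨(2 / m : ℚ), ?_⟩
    have : (m : ℝ) ≠ 0 := Int.cast_ne_zero.mpr hm0
    push_cast
    field_simp
    linarith [hbm]
  · -- constant positive value contradicts γ → 0
    set c : ℝ := γ n0 with hc
    have hcpos : 0 < c := by
      rcases lt_or_eq_of_le (hγ n0) with h | h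
      · exact h
      · exfalso; apply hbm; rw [← hMn0, hc, ← h]; ring
    have hevc : ∀ᶠ n in Filter.atTop, γ n < c := hγ0.eventually_lt_const hcpos
    rw [Filter.eventually_atTop] at hevc
    obtain ⟨N, hN⟩ := hevc
    obtain ⟨n1, hn1F, hn1N⟩ := hF.exists_gt N
    have h1 := hM n1 hn1F.1.1
    rw [hn1F.2] at h1
    have : γ n1 = c := by
      have : 2 + 2 * γ n1 = 2 + 2 * γ n0 := by rw [h1, hMn0]
      linarith
    have := hN n1 (le_of_lt hn1N)
    linarith
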